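/- Let H be a complex Hilbert space, T a bounded operator on H, and g > 0 with T*T ≥ g²·1 and TT* ≥ g²·1. Let P be an orthogonal projection on H (P = P* = P²), set η = ‖PT − TP‖ and x = PTP. Then x*x ≥ (g² − η²)·P and xx* ≥ (g² − η²)·P in the ordering of bounded self-adjoint operators on H. -/

import Mathlib

open ContinuousLinearMap

section Aux

variable {H : Type*} [NormedAddCommGroup H] [InnerProductSpace ℂ H] [CompleteSpace H]

local notation "⟪" x ", " y "⟫" => @inner ℂ _ _ x y

private lemma proj_inner (P : H →L[ℂ] H) (hP1 : IsSelfAdjoint P) (hP2 : P * P = P) (a : H) :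
    RCLike.re ⟪P a, a⟫ = ‖P a‖ ^ 2 := by
  have hadj : adjoint P = P := by rw [← star_eq_adjoint, hP1.star_eq]
  have : ⟪P a, a⟫ = ⟪P a, P a⟫ := by
    conv_lhs => rw [← hP2]
    rw [mul_apply_eq_comp, ← adjoint_inner_right, hadj]
  rw [this, inner_self_eq_norm_sq]

private lemma key (S : H →L[ℂ] H) (g : ℝ)
    (hS : (star S * S - ((g ^ 2 : ℝ) : ℂ) • (1 : H →L[ℂ] H)).IsPositive)
    (P : H →L[ℂ] H) (hP1 : IsSelfAdjoint P) (hP2 : P * P = P) :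
    (star (P * S * P) * (P * S * P)
        - (((g ^ 2 - ‖P * S - S * P‖ ^ 2 : ℝ)) : ℂ) • P).IsPositive := by
  set η := ‖P * S - S * P‖ with hη
  have hadj : adjoint P = P := by rw [← star_eq_adjoint, hP1.star_eq]
  constructor
  · rw [← isSelfAdjoint_iff_isSymmetric]
    apply IsSelfAdjoint.sub
    · exact IsSelfAdjoint.star_mul_self _
    · rw [IsSelfAdjoint, star_smul, hP1.star_eq, Complex.star_def, Complex.conj_ofReal]
  · intro ξ
    rw [reApplyInnerSelf_apply]
    rw [sub_apply, smul_apply, inner_sub_left, map_sub]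
    have h1 : RCLike.re ⟪(star (P * S * P) * (P * S * P)) ξ, ξ⟫ = ‖(P * S * P) ξ‖ ^ 2 := by
      rw [mul_apply_eq_comp, star_eq_adjoint, adjoint_inner_left, inner_self_eq_norm_sq]
    have h2 : RCLike.re ⟪(((g ^ 2 - η ^ 2 : ℝ)) : ℂ) • P ξ, ξ⟫
        = (g ^ 2 - η ^ 2) * ‖P ξ‖ ^ 2 := by
      rw [inner_smul_left, Complex.conj_ofReal, ← proj_inner P hP1 hP2 ξ]
      simp [Complex.re_ofReal_mul, ← Complex.ofReal_pow]
    rw [h1, h2]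
    -- main inequality
    set v := P ξ with hv
    have hPv : P v = v := by rw [hv, ← mul_apply_eq_comp, hP2]
    set b := S v with hb
    have hx : (P * S * P) ξ = P b := by simp [mul_apply, hv, hb]
    -- lower bound on ‖S v‖
    have hlow : g ^ 2 * ‖v‖ ^ 2 ≤ ‖b‖ ^ 2 := by
      have := hS.2 v
      rw [reApplyInnerSelf_apply, sub_apply, inner_sub_left, map_sub, mul_apply_eq_comp,
        star_eq_adjoint, adjoint_inner_left, inner_self_eq_norm_sq, smul_apply,
        inner_smul_left, Complex.conj_ofReal, one_apply_eq_self] at this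
      have h' : RCLike.re (((g ^ 2 : ℝ) : ℂ) * ⟪v, v⟫) = g ^ 2 * ‖v‖ ^ 2 := by
        rw [show RCLike.re (((g ^ 2 : ℝ) : ℂ) * ⟪v, v⟫)
            = g ^ 2 * RCLike.re (⟪v, v⟫ : ℂ) from by simp [Complex.re_ofReal_mul, ← Complex.ofReal_pow],
          inner_self_eq_norm_sq]
      rw [h'] at this
      linarith
    -- commutator bound
    have hcomm : ‖b - P b‖ ≤ η * ‖v‖ := by
      have heq : b - P b = (S * P - P * S) v := by
        simp [sub_apply, mul_apply, hPv, hb]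
      have hnorm : ‖S * P - P * S‖ = η := by
        rw [hη, ← norm_neg (P * S - S * P)]; congr 1; abel
      calc ‖b - P b‖ = ‖(S * P - P * S) v‖ := by rw [heq]
        _ ≤ ‖S * P - P * S‖ * ‖v‖ := le_opNorm _ _
        _ = η * ‖v‖ := by rw [hnorm]
    -- Pythagoras
    have hpyth : ‖P b‖ ^ 2 = ‖b‖ ^ 2 - ‖b - P b‖ ^ 2 := by
      have h0 : ⟪P b, b - P b⟫ = 0 := by
        rw [inner_sub_right, sub_eq_zero]
        conv_lhs => rw [← hP2]
        rw [mul_apply_eq_comp, ← adjoint_inner_right, hadj]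
      have := norm_add_sq (𝕜 := ℂ) (P b) (b - P b)
      rw [h0] at this
      simp only [map_zero, mul_zero, add_zero] at this
      have hsum : P b + (b - P b) = b := by abel
      rw [hsum] at this
      linarith
    rw [hx, hpyth]
    have hb2 : ‖b - P b‖ ^ 2 ≤ η ^ 2 * ‖v‖ ^ 2 := by
      have h := hcomm
      nlinarith [norm_nonneg (b - P b), norm_nonneg v, norm_nonneg (P * S - S * P)]
    nlinarith [norm_nonneg v]

end Aux

/-- If `T` is a bounded operator on a complex Hilbert space with `T*T ≥ g²·1` and
`TT* ≥ g²·1` for some `g > 0`, and `P` is an orthogonal projection with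
`η = ‖PT - TP‖` and `x = PTP`, then `x*x ≥ (g² - η²)·P` and `xx* ≥ (g² - η²)·P`
in the ordering of bounded self-adjoint operators (`S ≥ R` iff `S - R` is positive). -/
theorem compression_lower_bound {H : Type*} [NormedAddCommGroup H]
    [InnerProductSpace ℂ H] [CompleteSpace H]
    (T : H →L[ℂ] H) (g : ℝ) (hg : 0 < g)
    (hT1 : (star T * T - ((g ^ 2 : ℝ) : ℂ) • (1 : H →L[ℂ] H)).IsPositive)
    (hT2 : (T * star T - ((g ^ 2 : ℝ) : ℂ) • (1 : H →L[ℂ] H)).IsPositive)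
    (P : H →L[ℂ] H) (hP1 : IsSelfAdjoint P) (hP2 : P * P = P) :
    (star (P * T * P) * (P * T * P)
        - (((g ^ 2 - ‖P * T - T * P‖ ^ 2 : ℝ)) : ℂ) • P).IsPositive ∧
      ((P * T * P) * star (P * T * P)
        - (((g ^ 2 - ‖P * T - T * P‖ ^ 2 : ℝ)) : ℂ) • P).IsPositive := by
  refine ⟨key T g hT1 P hP1 hP2, ?_⟩
  have hS : (star (star T) * star T - ((g ^ 2 : ℝ) : ℂ) • (1 : H →L[ℂ] H)).IsPositive := by
    rwa [star_star]
  have h := key (star T) g hS P hP1 hP2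
  have hnorm : ‖P * star T - star T * P‖ = ‖P * T - T * P‖ := by
    rw [show P * star T - star T * P = star (T * P - P * T) by
      simp [star_sub, star_mul, hP1.star_eq], norm_star, ← norm_neg (P * T - T * P)]
    congr 1; abel
  have heq : star (P * star T * P) * (P * star T * P)
      = (P * T * P) * star (P * T * P) := by
    simp [star_mul, hP1.star_eq, mul_assoc]
  rw [hnorm, heq] at h
  exact h
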